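/- Let g : ℝ≥0 × Ω → ℝ^m (Ω ⊆ ℝ^d) satisfy: (i) there is a finite positive measure μ on ℝ≥0 such that for all x₁ ≤ x₂ and all u ∈ Ω, ‖g(x₂+,u) − g(x₁−,u)‖ ≤ μ([x₁,x₂]); (ii) there is L̂ > 0 with ‖g(x,u) − g(x,w)‖ ≤ L̂·‖u − w‖ for all x, u, w. Then for every function u : ℝ≥0 → Ω of bounded variation, the composed function x ↦ g(x, u(x)) has bounded total variation, and TV(g(·,u(·))) ≤ 2·μ(ℝ≥0) + L̂·TV(u). -/

import Mathlib

open MeasureTheory Set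

/-- Proposition 2.1 (total variation bound for the composed source term):
if `g` satisfies a measure-modulus of continuity in `x` and is Lipschitz in `u`,
then along any BV function `u` (with all partition sums bounded by `B`), every
partition sum of `x ↦ g x (u x)` is bounded by `2 μ(ℝ≥0) + Lhat B`. -/
lemma sum_meas_le {μ : Measure ℝ} [IsFiniteMeasure μ] {N : ℕ} (s : Fin N → Set ℝ)
    (hm : ∀ i, MeasurableSet (s i)) (hd : Pairwise (Function.onFun Disjoint s)) :
    ∑ i, (μ (s i)).toReal ≤ (μ univ).toReal := by
  rw [← ENNReal.toReal_sum (fun i _ => measure_ne_top μ _)]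
  apply ENNReal.toReal_mono (measure_ne_top μ _)
  rw [← tsum_fintype (L := SummationFilter.unconditional _), ← measure_iUnion hd hm]
  exact measure_mono (subset_univ _)

theorem source_term_bounded_variation
    {d m : ℕ} (Ω : Set (EuclideanSpace ℝ (Fin d)))
    (g : ℝ → EuclideanSpace ℝ (Fin d) → EuclideanSpace ℝ (Fin m))
    (μ : Measure ℝ) (hμ : IsFiniteMeasure μ)
    (hg_x : ∀ x₁ x₂ : ℝ, 0 ≤ x₁ → x₁ ≤ x₂ → ∀ u ∈ Ω,
      ‖g x₂ u - g x₁ u‖ ≤ (μ (Icc x₁ x₂)).toReal)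
    (Lhat : ℝ) (hLhat : 0 < Lhat)
    (hg_u : ∀ x : ℝ, 0 ≤ x → ∀ u ∈ Ω, ∀ w ∈ Ω,
      ‖g x u - g x w‖ ≤ Lhat * ‖u - w‖)
    (u : ℝ → EuclideanSpace ℝ (Fin d)) (hu : ∀ x : ℝ, 0 ≤ x → u x ∈ Ω)
    (B : ℝ)
    (huBV : ∀ (N : ℕ) (x : Fin (N + 1) → ℝ), StrictMono x → (∀ i, 0 ≤ x i) →
      ∑ i : Fin N, ‖u (x i.succ) - u (x i.castSucc)‖ ≤ B) :
    ∀ (N : ℕ) (x : Fin (N + 1) → ℝ), StrictMono x → (∀ i, 0 ≤ x i) →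
      ∑ i : Fin N, ‖g (x i.succ) (u (x i.succ)) - g (x i.castSucc) (u (x i.castSucc))‖
        ≤ 2 * (μ univ).toReal + Lhat * B := by
  intro N x hmono hpos
  haveI := hμ
  have hle : ∀ i : Fin N, x i.castSucc ≤ x i.succ := fun i =>
    (hmono (Fin.castSucc_lt_succ : i.castSucc < i.succ)).le
  have key : ∀ i : Fin N,
      ‖g (x i.succ) (u (x i.succ)) - g (x i.castSucc) (u (x i.castSucc))‖
      ≤ Lhat * ‖u (x i.succ) - u (x i.castSucc)‖ + (μ (Icc (x i.castSucc) (x i.succ))).toReal := by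
    intro i
    calc ‖g (x i.succ) (u (x i.succ)) - g (x i.castSucc) (u (x i.castSucc))‖
        ≤ ‖g (x i.succ) (u (x i.succ)) - g (x i.succ) (u (x i.castSucc))‖
          + ‖g (x i.succ) (u (x i.castSucc)) - g (x i.castSucc) (u (x i.castSucc))‖ := by
          have := norm_sub_le_norm_sub_add_norm_sub (g (x i.succ) (u (x i.succ)))
            (g (x i.succ) (u (x i.castSucc))) (g (x i.castSucc) (u (x i.castSucc)))
          exact this
      _ ≤ Lhat * ‖u (x i.succ) - u (x i.castSucc)‖
          + (μ (Icc (x i.castSucc) (x i.succ))).toReal := by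
          gcongr
          · exact hg_u _ (hpos _) _ (hu _ (hpos _)) _ (hu _ (hpos _))
          · exact hg_x _ _ (hpos _) (hle i) _ (hu _ (hpos _))
  calc ∑ i : Fin N, ‖g (x i.succ) (u (x i.succ)) - g (x i.castSucc) (u (x i.castSucc))‖
      ≤ ∑ i : Fin N, (Lhat * ‖u (x i.succ) - u (x i.castSucc)‖
          + (μ (Icc (x i.castSucc) (x i.succ))).toReal) :=
        Finset.sum_le_sum fun i _ => key i
    _ = Lhat * ∑ i : Fin N, ‖u (x i.succ) - u (x i.castSucc)‖
          + ∑ i : Fin N, (μ (Icc (x i.castSucc) (x i.succ))).toReal := by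
        rw [Finset.sum_add_distrib, Finset.mul_sum]
    _ ≤ Lhat * B + 2 * (μ univ).toReal := by
        gcongr
        · exact huBV N x hmono hpos
        · -- measure sum bound
          have hsplit : ∀ i : Fin N, (μ (Icc (x i.castSucc) (x i.succ))).toReal
              ≤ (μ (Ico (x i.castSucc) (x i.succ))).toReal + (μ {x i.succ}).toReal := by
            intro i
            rw [← ENNReal.toReal_add (measure_ne_top μ _) (measure_ne_top μ _)]
            apply ENNReal.toReal_mono (by finiteness)
            calc μ (Icc (x i.castSucc) (x i.succ))
                ≤ μ (Ico (x i.castSucc) (x i.succ) ∪ {x i.succ}) := by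
                  apply measure_mono
                  intro y hy
                  rcases eq_or_lt_of_le hy.2 with h | h
                  · exact Or.inr h
                  · exact Or.inl ⟨hy.1, h⟩
              _ ≤ _ := measure_union_le _ _
          calc ∑ i : Fin N, (μ (Icc (x i.castSucc) (x i.succ))).toReal
              ≤ ∑ i : Fin N, ((μ (Ico (x i.castSucc) (x i.succ))).toReal + (μ {x i.succ}).toReal) :=
                Finset.sum_le_sum fun i _ => hsplit i
            _ = ∑ i : Fin N, (μ (Ico (x i.castSucc) (x i.succ))).toReal
                + ∑ i : Fin N, (μ ({x i.succ} : Set ℝ)).toReal := Finset.sum_add_distrib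
            _ ≤ (μ univ).toReal + (μ univ).toReal := by
                gcongr
                · apply sum_meas_le _ (fun i => measurableSet_Ico)
                  intro i j hij
                  simp only [Function.onFun]
                  rw [Set.Ico_disjoint_Ico]
                  rcases lt_or_gt_of_ne hij with h | h
                  · have hx : x i.succ ≤ x j.castSucc :=
                      hmono.monotone (Fin.succ_le_castSucc_iff.mpr h)
                    exact (min_le_left _ _).trans (hx.trans (le_max_right _ _))
                  · have hx : x j.succ ≤ x i.castSucc :=
                      hmono.monotone (Fin.succ_le_castSucc_iff.mpr h)
                    exact (min_le_right _ _).trans (hx.trans (le_max_left _ _))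
                · apply sum_meas_le _ (fun i => measurableSet_singleton _)
                  intro i j hij
                  simp only [Function.onFun, Set.disjoint_singleton]
                  exact fun h => hij (Fin.succ_injective _ (hmono.injective h))
            _ = 2 * (μ univ).toReal := by ring
    _ = 2 * (μ univ).toReal + Lhat * B := by ring
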